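/- Let k₁, k₂, d, w, z be integers with k₁ ≠ 0, d ≠ 0, w ≠ 0, and set s = d/w. Let γ = (√5 − 1)/2 be the golden ratio and define Δ = −k₂/k₁ + s/(z + γ). Then there exists a constant C > 0 such that for all integers m₁, m₂ with m₁ ≠ 0, one has |m₁ Δ + m₂| ≥ C/|m₁|. -/

import Mathlib

open Polynomial

/-- the sequence element Δ = −k₂/k₁ + s/(z + γ), with s = d/w rational
and γ the golden ratio, satisfies the strong Diophantine condition. -/
theorem delta_strong_diophantine
    (k₁ k₂ d w z : ℤ) (hk₁ : k₁ ≠ 0) (hd : d ≠ 0) (hw : w ≠ 0)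
    (s γ Δ : ℝ)
    (hs : s = (d : ℝ) / (w : ℝ))
    (hγ : γ = (Real.sqrt 5 - 1) / 2)
    (hΔ : Δ = -(k₂ : ℝ) / (k₁ : ℝ) + s / ((z : ℝ) + γ)) :
    ∃ C : ℝ, 0 < C ∧ ∀ m₁ m₂ : ℤ, m₁ ≠ 0 →
      C / |(m₁ : ℝ)| ≤ |(m₁ : ℝ) * Δ + (m₂ : ℝ)| := by
  have h5 : Real.sqrt 5 * Real.sqrt 5 = 5 := Real.mul_self_sqrt (by norm_num)
  -- irrationality of γ
  have irr5 : Irrational (Real.sqrt 5) := by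
    have := (Nat.prime_five).irrational_sqrt
    simpa using this
  have irrγ : Irrational γ := by
    rw [hγ]
    have h1 : Irrational (Real.sqrt 5 - (1:ℤ)) := Irrational.sub_intCast irr5 1
    have h2 : Irrational ((Real.sqrt 5 - (1:ℤ)) / (2:ℤ)) := Irrational.div_intCast h1 (by norm_num)
    simpa using h2
  have hk₁' : (k₁ : ℝ) ≠ 0 := Int.cast_ne_zero.mpr hk₁
  have hd' : (d : ℝ) ≠ 0 := Int.cast_ne_zero.mpr hd
  have hw' : (w : ℝ) ≠ 0 := Int.cast_ne_zero.mpr hw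
  have irrt : Irrational ((z : ℝ) + γ) := Irrational.intCast_add irrγ z
  have ht0 : ((z : ℝ) + γ) ≠ 0 := irrt.ne_zero
  -- Δ is irrational
  have irrΔ : Irrational Δ := by
    have e : Δ = ((-k₂ / k₁ : ℚ) : ℝ) + ((d / w : ℚ) : ℝ) * ((z : ℝ) + γ)⁻¹ := by
      rw [hΔ, hs]; push_cast; ring
    rw [e]
    exact (Irrational.ratCast_add (-k₂ / k₁ : ℚ) (Irrational.ratCast_mul irrt.inv (by
      rw [div_ne_zero_iff]; exact ⟨Int.cast_ne_zero.mpr hd, Int.cast_ne_zero.mpr hw⟩)))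
  -- integer quadratic coefficients
  set a₂ : ℤ := (z^2 - z - 1) * k₁^2 * w^2 with ha₂
  set a₁ : ℤ := (1 - 2*z)*d*w*k₁^2 + 2*(z^2 - z - 1)*k₂*k₁*w^2 with ha₁
  set a₀ : ℤ := d^2*k₁^2 + (1 - 2*z)*d*w*k₁*k₂ + (z^2 - z - 1)*k₂^2*w^2 with ha₀
  have hu : z^2 - z - 1 ≠ 0 := by
    intro h
    have he := Int.even_mul_succ_self (z - 1)
    rw [show (z-1)*(z-1+1) = (z^2 - z - 1) + 1 by ring, h] at he
    norm_num at he
  have ha₂0 : a₂ ≠ 0 := mul_ne_zero (mul_ne_zero hu (pow_ne_zero _ hk₁)) (pow_ne_zero _ hw)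
  have ht2 : ((z:ℝ) + γ)^2 + (1 - 2*(z:ℝ))*((z:ℝ) + γ) + ((z:ℝ)^2 - z - 1) = 0 := by
    rw [hγ]; ring_nf; nlinarith [h5]
  have h1 : ((k₁:ℝ)*Δ + k₂) * ((z:ℝ) + γ) * w = (d:ℝ) * k₁ := by
    rw [hΔ, hs]; field_simp; ring
  have key : (a₂:ℝ) * Δ^2 + (a₁:ℝ) * Δ + (a₀:ℝ) = 0 := by
    rw [ha₂, ha₁, ha₀]
    push_cast
    linear_combination (((k₁:ℝ)*Δ + k₂) * w)^2 * ht2 -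
      ((1 - 2*(z:ℝ)) * (((k₁:ℝ)*Δ + k₂) * w) + (d:ℝ)*k₁ +
        (((k₁:ℝ)*Δ + k₂) * w) * ((z:ℝ) + γ)) * h1
  -- the polynomial
  set p : ℤ[X] := C a₂ * X^2 + C a₁ * X + C a₀ with hp
  have hdeg : p.natDegree = 2 := natDegree_quadratic ha₂0
  have hp0 : p ≠ 0 := fun h => by simp [h] at hdeg
  have fa : eval Δ (map (algebraMap ℤ ℝ) p) = 0 := by
    rw [Polynomial.eval_map, hp]
    simp only [eval₂_add, eval₂_mul, eval₂_C, eval₂_X, eval₂_pow]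
    simp only [algebraMap_int_eq, eq_intCast]
    linear_combination key
  obtain ⟨A, hA, hAll⟩ := Liouville.exists_pos_real_of_irrational_root irrΔ hp0 fa
  refine ⟨A⁻¹, inv_pos.mpr hA, fun m₁ m₂ hm₁ => ?_⟩
  set b : ℕ := m₁.natAbs - 1 with hb
  set a : ℤ := -m₂ * m₁.sign with ha
  have hnb : b + 1 = m₁.natAbs := by
    have : 1 ≤ m₁.natAbs := Int.natAbs_pos.mpr hm₁
    omega
  have hb1 : ((b:ℝ) + 1) = |(m₁:ℝ)| := by
    calc ((b:ℝ) + 1) = ((b + 1 : ℕ) : ℝ) := by push_cast; ring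
    _ = (m₁.natAbs : ℝ) := by rw [hnb]
    _ = |(m₁:ℝ)| := by simp [Nat.cast_natAbs]
  have hav : ((a:ℝ)) / ((b:ℝ) + 1) = -(m₂:ℝ) / m₁ := by
    rw [hb1, ha]
    rcases lt_or_gt_of_ne hm₁ with h | h
    · rw [Int.sign_eq_neg_one_of_neg h, abs_of_neg (by exact_mod_cast h)]
      push_cast
      rw [div_neg, neg_div]
      ring
    · rw [Int.sign_eq_one_of_pos h, abs_of_pos (by exact_mod_cast h)]
      push_cast; ring_nf
  have hm₁' : (m₁:ℝ) ≠ 0 := Int.cast_ne_zero.mpr hm₁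
  have habs : |Δ - (a:ℝ)/((b:ℝ)+1)| = |(m₁:ℝ)*Δ + m₂| / |(m₁:ℝ)| := by
    rw [hav, ← abs_div]
    congr 1
    field_simp
    ring
  have this2 := hAll a b
  rw [hdeg, habs, hb1] at this2
  have hm1pos : 0 < |(m₁:ℝ)| := abs_pos.mpr hm₁'
  have hsq : ((m₁:ℝ))^2 = |(m₁:ℝ)| * |(m₁:ℝ)| := by
    rw [abs_mul_abs_self]; ring
  have h2 : (1:ℝ) ≤ |(m₁:ℝ)*Δ + m₂| * |(m₁:ℝ)| * A := by
    have e : |(m₁:ℝ)*Δ + m₂| * |(m₁:ℝ)| * A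
        = |(m₁:ℝ)|^2 * (|(m₁:ℝ)*Δ + m₂| / |(m₁:ℝ)| * A) := by
      field_simp
    rw [e]; exact this2
  rw [div_le_iff₀ hm1pos, inv_eq_one_div, div_le_iff₀ hA]
  exact h2
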